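/- In the abstract critical-map setup, for every vertex x, every natural number k, and every real α > 1, one has |P k x| / k! ≤ ((α+1)/(α−1))^{d(x,O)} · (α·δ/2)^k, where d(x,O) is the combinatorial (graph) distance from x to the base vertex O. -/

import Mathlib

open Complex

theorem discrete_monomial_growth_estimate
    {V : Type*} (G : SimpleGraph V) (hG : G.Connected)
    (O : V) (δ : ℝ) (hδ : 0 < δ)
    (Z : V → ℂ) (hZO : Z O = 0)
    (hZ : ∀ x y : V, G.Adj x y → ‖Z y - Z x‖ = δ)
    (P : ℕ → V → ℂ)
    (hP0 : ∀ v : V, P 0 v = 1)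
    (hPO : ∀ k : ℕ, 1 ≤ k → P k O = 0)
    (hPrec : ∀ k : ℕ, 1 ≤ k → ∀ x y : V, G.Adj x y →
      P k y = P k x + (k : ℂ) * (P (k - 1) x + P (k - 1) y) * (Z y - Z x) / 2)
    (x : V) (k : ℕ) (α : ℝ) (hα : 1 < α) :
    ‖P k x‖ / (Nat.factorial k : ℝ) ≤
      ((α + 1) / (α - 1)) ^ (G.dist x O) * (α * δ / 2) ^ k := by
  set C : ℝ := (α + 1) / (α - 1) with hCdef
  set A : ℝ := α * δ / 2 with hAdef
  have hα1 : (0:ℝ) < α - 1 := by linarith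
  have hC1 : (1:ℝ) ≤ C := by
    rw [hCdef, le_div_iff₀ hα1]; linarith
  have hC0 : (0:ℝ) < C := lt_of_lt_of_le one_pos hC1
  have hA0 : (0:ℝ) < A := by rw [hAdef]; positivity
  suffices h : ∀ k n (x : V), G.dist x O ≤ n →
      ‖P k x‖ / (Nat.factorial k : ℝ) ≤ C ^ n * A ^ k by
    exact h k (G.dist x O) x le_rfl
  intro k
  induction k with
  | zero =>
    intro n x _
    simp only [hP0, norm_one, Nat.factorial_zero, Nat.cast_one, div_one, pow_zero, mul_one]
    exact one_le_pow₀ hC1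
  | succ k ihk =>
    intro n
    induction n with
    | zero =>
      intro x hx
      have hxO : x = O := by
        have := Nat.le_zero.mp hx
        exact (hG.dist_eq_zero_iff).mp this
      subst hxO
      rw [hPO (k + 1) (by omega)]
      simp only [norm_zero, zero_div]
      positivity
    | succ n ihn =>
      intro x hx
      by_cases hdx : G.dist x O ≤ n
      · calc ‖P (k+1) x‖ / (Nat.factorial (k+1) : ℝ)
            ≤ C ^ n * A ^ (k+1) := ihn x hdx
          _ ≤ C ^ (n+1) * A ^ (k+1) := by
              gcongr
              · omega
      · have hdx' : G.dist x O = n + 1 := by omega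
        -- find a neighbor closer to O
        obtain ⟨p, hp⟩ := (hG.preconnected x O).exists_walk_length_eq_dist
        rw [hdx'] at hp
        cases p with
        | nil => simp at hp
        | @cons _ y _ hadj q =>
          have hq : q.length = n := by simpa using hp
          have hdy : G.dist y O ≤ n := hq ▸ SimpleGraph.dist_le q
          -- recurrence bound
          have hrec := hPrec (k+1) (by omega) y x hadj.symm
          simp only [Nat.add_sub_cancel] at hrec
          have habsZ : ‖Z x - Z y‖ = δ := hZ x y hadj ▸ (norm_sub_rev (Z x) (Z y))
          have ha : ‖P (k+1) x‖ ≤ ‖P (k+1) y‖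
              + ((k:ℝ)+1) * (‖P k y‖ + ‖P k x‖) * δ / 2 := by
            rw [hrec]
            refine (norm_add_le _ _).trans ?_
            have habsfac : ‖((k+1 : ℕ) : ℂ) * (P k y + P k x) * (Z x - Z y) / 2‖
                = ((k:ℝ)+1) * ‖P k y + P k x‖ * δ / 2 := by
              rw [norm_div, norm_mul, norm_mul, habsZ, Complex.norm_natCast, Complex.norm_two]
              push_cast; ring
            rw [habsfac]
            have hk1 : (0:ℝ) ≤ (k:ℝ) + 1 := by positivity
            gcongr
            exact norm_add_le _ _
          -- induction hypotheses
          have h1 : ‖P (k+1) y‖ ≤ C ^ n * A ^ (k+1) * (Nat.factorial (k+1) : ℝ) := by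
            have := ihn y hdy
            rwa [div_le_iff₀ (by positivity : (0:ℝ) < (Nat.factorial (k+1) : ℝ))] at this
          have h2 : ‖P k y‖ ≤ C ^ n * A ^ k * (Nat.factorial k : ℝ) := by
            have := ihk n y hdy
            rwa [div_le_iff₀ (by positivity : (0:ℝ) < (Nat.factorial k : ℝ))] at this
          have h3 : ‖P k x‖ ≤ C ^ (n+1) * A ^ k * (Nat.factorial k : ℝ) := by
            have := ihk (n+1) x hx
            rwa [div_le_iff₀ (by positivity : (0:ℝ) < (Nat.factorial k : ℝ))] at this
          -- key identity
          have key : C * A = A + (1 + C) * (δ / 2) := by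
            rw [hCdef, hAdef]; field_simp; ring
          have eq1 : C ^ (n+1) * A ^ (k+1) * (Nat.factorial (k+1) : ℝ)
              = (C ^ n * A ^ (k+1) * (Nat.factorial (k+1) : ℝ))
                + ((k:ℝ)+1) * ((C ^ n * A ^ k * (Nat.factorial k : ℝ))
                  + (C ^ (n+1) * A ^ k * (Nat.factorial k : ℝ))) * δ / 2 := by
            have hfac : ((Nat.factorial (k+1) : ℝ)) = ((k:ℝ)+1) * (Nat.factorial k : ℝ) := by
              rw [Nat.factorial_succ]; push_cast; ring
            rw [hfac, pow_succ C, pow_succ A]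
            linear_combination (C ^ n * A ^ k * ((k:ℝ)+1) * (Nat.factorial k : ℝ)) * key
          rw [div_le_iff₀ (by positivity : (0:ℝ) < (Nat.factorial (k+1) : ℝ)), eq1]
          have hfk : (0:ℝ) ≤ (k:ℝ) + 1 := by positivity
          calc ‖P (k+1) x‖
              ≤ ‖P (k+1) y‖
                + ((k:ℝ)+1) * (‖P k y‖ + ‖P k x‖) * δ / 2 := ha
            _ ≤ (C ^ n * A ^ (k+1) * (Nat.factorial (k+1) : ℝ))
                + ((k:ℝ)+1) * ((C ^ n * A ^ k * (Nat.factorial k : ℝ))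
                  + (C ^ (n+1) * A ^ k * (Nat.factorial k : ℝ))) * δ / 2 := by
                gcongr
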